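/- Suppose all types are equally likely (μ₀(θ_i) = 1/N for all i). Then every interim payoff profile w in the linear reputation setting satisfies w = Pρ for a symmetric doubly stochastic matrix P; in particular, ρ majorizes w. -/

import Mathlib

def CompletelyPositive {N : ℕ} (C : Matrix (Fin N) (Fin N) ℝ) : Prop :=
  ∃ (M : ℕ) (x : Fin M → Fin N → ℝ), (∀ m i, 0 ≤ x m i) ∧
    C = ∑ m, Matrix.vecMulVec (x m) (x m)

/-- With a uniform prior, every interim payoff profile in the linear reputation
setting equals `P ρ` for a symmetric doubly stochastic matrix `P`; in particular
`ρ` majorizes it. -/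
theorem stmt13 {N : ℕ} (hN : 0 < N) (ρ v : Fin N → ℝ)
    (hv : ∃ C : Matrix (Fin N) (Fin N) ℝ,
        CompletelyPositive C ∧
        C.mulVec (fun _ => 1) = (fun _ => (N : ℝ)⁻¹) ∧
        v = (Matrix.diagonal (fun _ => (N : ℝ)) * C).mulVec ρ) :
    ∃ P : Matrix (Fin N) (Fin N) ℝ,
      (∀ i j, 0 ≤ P i j) ∧ (∀ i, ∑ j, P i j = 1) ∧ (∀ j, ∑ i, P i j = 1) ∧
      P.IsSymm ∧ v = P.mulVec ρ := by
  obtain ⟨C, ⟨M, x, hx, hC⟩, hrow, hvdef⟩ := hv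
  have hNpos : (0:ℝ) < N := by exact_mod_cast hN
  -- nonnegativity of entries of C
  have hCnn : ∀ i j, 0 ≤ C i j := by
    intro i j
    rw [hC]
    simp only [Matrix.sum_apply, Matrix.vecMulVec_apply]
    exact Finset.sum_nonneg fun m _ => mul_nonneg (hx m i) (hx m j)
  -- symmetry of C
  have hCsymm : ∀ i j, C i j = C j i := by
    intro i j
    rw [hC]
    simp only [Matrix.sum_apply, Matrix.vecMulVec_apply]
    exact Finset.sum_congr rfl fun m _ => mul_comm _ _
  -- row sums
  have hCrow : ∀ i, ∑ j, C i j = (N : ℝ)⁻¹ := by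
    intro i
    have := congrFun hrow i
    simpa [Matrix.mulVec, dotProduct] using this
  refine ⟨fun i j => (N : ℝ) * C i j, ?_, ?_, ?_, ?_, ?_⟩
  · intro i j; exact mul_nonneg hNpos.le (hCnn i j)
  · intro i
    rw [← Finset.mul_sum, hCrow i, mul_inv_cancel₀ hNpos.ne']
  · intro j
    have : ∀ i, (N:ℝ) * C i j = (N:ℝ) * C j i := fun i => by rw [hCsymm i j]
    simp_rw [this]
    rw [← Finset.mul_sum, hCrow j, mul_inv_cancel₀ hNpos.ne']
  · ext i j
    show (N:ℝ) * C j i = (N:ℝ) * C i j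
    rw [hCsymm j i]
  · rw [hvdef]
    ext i
    simp [Matrix.mulVec, dotProduct, Matrix.mul_apply, Matrix.diagonal,
      Finset.mul_sum, mul_assoc]
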